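/- Let A be a discrete valuation ring with uniformizer t and residue field k, F and E free A-modules of rank n with a pairing a : F × E → A nondegenerate over the fraction field. Define F^{(j)} = {f ∈ F : a(f, e) ∈ t^j A for all e ∈ E} and let F̄^{(j)} be the image of F^{(j)} in F/tF. Then ∑_{j≥1} dim_k F̄^{(j)} = ν_t(det θ), where θ : F → E^∨ is the map induced by the pairing. -/

import Mathlib

open IsLocalRing Module

lemma stmt11_sum_aux {n : ℕ} (e : Fin n → ℕ) :
    ∑' j : ℕ, (((Finset.univ.filter (fun i => j < e i)).card : ℕ) : ENNReal)
      = ((∑ i, e i : ℕ) : ENNReal) := by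
  have h1 : ∀ j : ℕ, (((Finset.univ.filter (fun i => j < e i)).card : ℕ) : ENNReal)
      = ∑ i : Fin n, (if j < e i then (1 : ENNReal) else 0) := by
    intro j
    rw [Finset.card_filter]
    push_cast
    rfl
  simp_rw [h1]
  rw [Summable.tsum_finsetSum (fun i _ => ENNReal.summable)]
  rw [Nat.cast_sum]
  refine Finset.sum_congr rfl fun i _ => ?_
  rw [tsum_eq_sum (s := Finset.range (e i)) (by
    intro j hj
    rw [if_neg]
    simpa using hj)]
  rw [Finset.sum_congr rfl (fun j hj => if_pos (Finset.mem_range.mp hj))]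
  simp



/-- abstract Andersen–Kaneda sum formula.  Let `A` be a DVR with
uniformizer `t` and residue field `k`, `F = E = A^n`, and `a : F × E → A` a bilinear
pairing nondegenerate over the fraction field, with induced map `θ : F → E^∨`.  Define
`F^{(j)} = {f ∈ F : a(f,e) ∈ t^j A for all e ∈ E}` and let `F̄^{(j)}` be the image of
`F^{(j)}` in `F/tF ≅ k^n`.  If `ν_t(det θ) = d` (i.e. `det θ` is associated to `t^d`),
then `∑_{j ≥ 1} dim_k F̄^{(j)} = d`. -/
theorem stmt11 {A : Type*} [CommRing A] [IsDomain A] [IsDiscreteValuationRing A]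
    (t : A) (ht : Irreducible t) (n : ℕ)
    (a : (Fin n → A) →ₗ[A] ((Fin n → A) →ₗ[A] A))
    (hnd : (LinearMap.toMatrix (Pi.basisFun A (Fin n))
        ((Pi.basisFun A (Fin n)).dualBasis) a).det ≠ 0)
    (d : ℕ)
    (hd : Associated ((LinearMap.toMatrix (Pi.basisFun A (Fin n))
        ((Pi.basisFun A (Fin n)).dualBasis) a).det) (t ^ d)) :
    ∑' j : ℕ,
      (Module.finrank (IsLocalRing.ResidueField A)
        (Submodule.span (IsLocalRing.ResidueField A)
          ((fun v i => IsLocalRing.residue A (v i)) ''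
            {f : Fin n → A | ∀ e : Fin n → A, t ^ (j + 1) ∣ a f e})) : ENNReal)
      = (d : ENNReal) := by
  classical
  set bF := Pi.basisFun A (Fin n) with hbF
  set bD := bF.dualBasis with hbD
  -- injectivity of a
  have hinj : Function.Injective a := by
    rw [← LinearMap.ker_eq_bot]
    rw [LinearMap.ker_eq_bot']
    intro f hf
    have h1 := LinearMap.toMatrix_mulVec_repr bF bD a f
    rw [hf] at h1
    simp only [map_zero] at h1
    have h2 : (⇑(bF.repr f) : Fin n → A) = 0 :=
      Matrix.eq_zero_of_mulVec_eq_zero hnd (by rw [h1]; rfl)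
    funext i
    have := congrFun h2 i
    simpa [bF] using this
  set N := LinearMap.range a with hN
  set eiso := LinearEquiv.ofInjective a hinj with heiso
  obtain ⟨m, snf⟩ := N.smithNormalForm bD
  have hm : n = m := by
    have h1 : Module.finrank A N = m := by
      rw [finrank_eq_card_basis snf.bN, Fintype.card_fin]
    have h2 : Module.finrank A N = n := by
      rw [← eiso.finrank_eq, finrank_eq_card_basis bF, Fintype.card_fin]
    rw [← h1, h2]
  subst hm
  set σe : Fin n ≃ Fin n :=
    Equiv.ofBijective snf.f ((Finite.injective_iff_bijective).mp snf.f.injective) with hσe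
  set cB : Basis (Fin n) A (Fin n → A) := snf.bN.map eiso.symm with hcBdef
  have hcB : ∀ i, a (cB i) = snf.a i • snf.bM (snf.f i) := by
    intro i
    rw [← snf.snf i]
    rw [hcBdef, Basis.map_apply]
    have : ∀ y : N, a (eiso.symm y) = (y : (Fin n → A) →ₗ[A] A) := by
      intro y
      rw [← LinearEquiv.ofInjective_apply a (h := hinj) (eiso.symm y), ← heiso,
        eiso.apply_symm_apply]
    exact this _
  have hf' : ∀ f : Fin n → A, a f = ∑ i, cB.repr f i • (snf.a i • snf.bM (snf.f i)) := by
    intro f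
    conv_lhs => rw [← cB.sum_repr f]
    rw [map_sum]
    exact Finset.sum_congr rfl fun i _ => by rw [map_smul, hcB]
  have hσapp : ∀ b : Fin n, σe b = snf.f b := fun _ => rfl
  have hrep : ∀ (f : Fin n → A) (kk : Fin n),
      snf.bM.repr (a f) kk = snf.a (σe.symm kk) * cB.repr f (σe.symm kk) := by
    intro f kk
    rw [hf']
    simp only [map_sum, map_smul, Finsupp.coe_finset_sum, Finset.sum_apply,
      Finsupp.coe_smul, Pi.smul_apply, Basis.repr_self, smul_eq_mul,
      Finsupp.single_apply]
    rw [Finset.sum_eq_single (σe.symm kk)]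
    · rw [if_pos (by rw [← hσapp]; exact σe.apply_symm_apply kk)]
      ring
    · intro b _ hb
      rw [if_neg, mul_zero, mul_zero]
      intro hcon
      exact hb (by rw [← σe.symm_apply_apply b, hσapp, hcon])
    · simp
  have hchar : ∀ (mm : ℕ) (f : Fin n → A),
      (∀ e' : Fin n → A, t ^ mm ∣ a f e') ↔ (∀ i, t ^ mm ∣ snf.a i * cB.repr f i) := by
    intro mm f
    constructor
    · intro h i
      have h2 : t ^ mm ∣ snf.bM.repr (a f) (σe i) := by
        have hexp : a f = ∑ l, a f (bF l) • bD l := by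
          conv_lhs => rw [← bD.sum_repr (a f)]
          exact Finset.sum_congr rfl fun l _ => by rw [Basis.dualBasis_repr]
        rw [hexp]
        simp only [map_sum, map_smul, Finsupp.coe_finset_sum, Finset.sum_apply,
          Finsupp.coe_smul, Pi.smul_apply, smul_eq_mul]
        exact Finset.dvd_sum fun l _ => (h (bF l)).mul_right _
      rw [hrep] at h2
      simpa using h2
    · intro h e'
      rw [hf', LinearMap.sum_apply]
      refine Finset.dvd_sum fun i _ => ?_
      rw [LinearMap.smul_apply, LinearMap.smul_apply, smul_eq_mul, smul_eq_mul]
      have h2 : cB.repr f i * (snf.a i * (snf.bM (snf.f i)) e')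
          = (snf.a i * cB.repr f i) * (snf.bM (snf.f i)) e' := by ring
      rw [h2]
      exact (h i).mul_right _
  -- determinant computation
  set M2 := LinearMap.toMatrix cB snf.bM a with hM2def
  have hM2 : M2 = (Matrix.diagonal snf.a).submatrix σe.symm _root_.id := by
    ext kk i
    rw [hM2def, LinearMap.toMatrix_apply, hcB]
    simp only [map_smul, Finsupp.coe_smul, Pi.smul_apply, Basis.repr_self,
      smul_eq_mul, Finsupp.single_apply, Matrix.submatrix_apply,
      Matrix.diagonal_apply, id]
    by_cases hc : snf.f i = kk
    · have hiq : σe.symm kk = i := by rw [← hc, ← hσapp, σe.symm_apply_apply]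
      rw [if_pos hc, if_pos hiq, hiq, mul_one]
    · rw [if_neg hc, if_neg (fun hcon => hc (by rw [← hσapp, ← hcon,
        σe.apply_symm_apply])), mul_zero]
  have hdet2 : Associated M2.det (∏ i, snf.a i) := by
    rw [hM2, Matrix.det_permute, Matrix.det_diagonal]
    rcases Int.units_eq_one_or (Equiv.Perm.sign σe.symm) with h | h <;> rw [h]
    · simpa using Associated.refl (∏ i, snf.a i)
    · refine ⟨-1, ?_⟩
      simp
  have hchain : LinearMap.toMatrix bF bD a
      = bD.toMatrix ⇑snf.bM * M2 * cB.toMatrix ⇑bF :=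
    (basis_toMatrix_mul_linearMap_toMatrix_mul_basis_toMatrix bF cB bD snf.bM a).symm
  have hu1 : IsUnit (bD.toMatrix ⇑snf.bM).det := by
    rw [← Basis.det_apply]; exact bD.isUnit_det snf.bM
  have hu2 : IsUnit (cB.toMatrix ⇑bF).det := by
    rw [← Basis.det_apply]; exact cB.isUnit_det bF
  have hMdet : Associated (LinearMap.toMatrix bF bD a).det M2.det := by
    refine Associated.symm ⟨hu1.unit * hu2.unit, ?_⟩
    rw [hchain, Matrix.det_mul, Matrix.det_mul]
    push_cast
    rw [hu1.unit_spec, hu2.unit_spec]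
    ring
  have hprod : Associated (∏ i, snf.a i) (t ^ d) :=
    hdet2.symm.trans (hMdet.symm.trans hd)
  -- exponents
  have ht0 : t ≠ 0 := ht.ne_zero
  have ha0 : ∀ i, snf.a i ≠ 0 := by
    have hp0 : (∏ i, snf.a i) ≠ 0 := by
      intro h0
      rw [h0] at hprod
      exact pow_ne_zero d ht0 ((associated_zero_iff_eq_zero _).mp hprod.symm)
    exact fun i => Finset.prod_ne_zero_iff.mp hp0 i (Finset.mem_univ i)
  choose ε hε using fun i =>
    IsDiscreteValuationRing.associated_pow_irreducible (ha0 i) ht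
  have hsum : ∑ i, ε i = d := by
    have h2 : Associated (∏ i, snf.a i) (∏ i, t ^ ε i) :=
      Associated.prod _ _ _ fun i _ => hε i
    rw [Finset.prod_pow_eq_pow_sum] at h2
    have h1 : Associated (t ^ (∑ i, ε i)) (t ^ d) := h2.symm.trans hprod
    exact le_antisymm
      ((pow_dvd_pow_iff ht0 ht.not_isUnit).mp h1.dvd)
      ((pow_dvd_pow_iff ht0 ht.not_isUnit).mp h1.symm.dvd)
  -- residues of the basis cB are linearly independent over the residue field
  set w : Fin n → (Fin n → ResidueField A) := fun i jj => residue A (cB i jj) with hwdef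
  have hwli : LinearIndependent (ResidueField A) w := by
    set W : Matrix (Fin n) (Fin n) (ResidueField A) :=
      ((bF.toMatrix ⇑cB).map (residue A)) with hWdef
    have hWu : IsUnit W := by
      rw [Matrix.isUnit_iff_isUnit_det, hWdef]
      have : (residue A) (bF.toMatrix ⇑cB).det = ((bF.toMatrix ⇑cB).map (residue A)).det := by
        rw [RingHom.map_det]; rfl
      rw [← this]
      refine IsUnit.map _ ?_
      rw [← Basis.det_apply]
      exact bF.isUnit_det cB
    have hcol : (fun i => W.transpose i) = w := by
      funext i jj
      simp [hWdef, Matrix.transpose_apply, Matrix.map_apply, Basis.toMatrix_apply,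
        hwdef, hbF]
    rw [← hcol]
    exact Matrix.linearIndependent_cols_iff_isUnit.mpr hWu
  have hdim : ∀ T : Finset (Fin n),
      Module.finrank (ResidueField A)
        (Submodule.span (ResidueField A) (w '' (T : Set (Fin n)))) = T.card := by
    intro T
    have h1 : LinearIndependent (ResidueField A) (fun i : {x // x ∈ T} => w i) :=
      hwli.comp _ Subtype.val_injective
    have h2 := finrank_span_eq_card h1
    have himg : Set.range (fun i : {x // x ∈ T} => w ↑i) = w '' (T : Set (Fin n)) := by
      ext y
      constructor
      · rintro ⟨⟨i, hiT⟩, rfl⟩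
        exact ⟨i, hiT, rfl⟩
      · rintro ⟨i, hiT, rfl⟩
        exact ⟨⟨i, hiT⟩, rfl⟩
    rw [himg] at h2
    rw [h2, Fintype.card_coe]
  -- the span of the residues of F^{(j)}
  have hspan : ∀ j : ℕ,
      Submodule.span (ResidueField A) ((fun v i => residue A (v i)) ''
        {f : Fin n → A | ∀ e : Fin n → A, t ^ (j + 1) ∣ a f e})
      = Submodule.span (ResidueField A)
          (w '' ((Finset.filter (fun i => j < ε i) Finset.univ : Finset (Fin n)) :
            Set (Fin n))) := by
    intro j
    apply le_antisymm
    · rw [Submodule.span_le]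
      rintro x ⟨f, hf, rfl⟩
      have hfc := (hchar (j + 1) f).mp hf
      have hrf : (fun v i => residue A (v i)) f
          = ∑ i, residue A (cB.repr f i) • w i := by
        funext jj
        conv_lhs => rw [show f = ∑ i, cB.repr f i • cB i from (cB.sum_repr f).symm]
        simp only [Finset.sum_apply, Pi.smul_apply, smul_eq_mul, map_sum, map_mul, hwdef]
      rw [hrf]
      refine Submodule.sum_mem _ fun i _ => ?_
      by_cases hi : j < ε i
      · refine Submodule.smul_mem _ _ (Submodule.subset_span ⟨i, ?_, rfl⟩)
        simp [hi]
      · have hdvd : t ∣ cB.repr f i := by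
          have h4 : t ^ (j + 1) ∣ t ^ ε i * cB.repr f i :=
            ((hε i).mul_right _).dvd_iff_dvd_right.mp (hfc i)
          rw [show j + 1 = ε i + (j + 1 - ε i) by omega, pow_add] at h4
          have h6 : t ^ (j + 1 - ε i) ∣ cB.repr f i :=
            (mul_dvd_mul_iff_left (pow_ne_zero (ε i) ht0)).mp h4
          exact dvd_trans (dvd_pow_self t (by omega : j + 1 - ε i ≠ 0)) h6
        have hz : residue A (cB.repr f i) = 0 := by
          rw [residue_eq_zero_iff]
          obtain ⟨u, hu⟩ := hdvd
          rw [hu]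
          exact Ideal.mul_mem_right _ _
            ((mem_maximalIdeal t).mpr (mem_nonunits_iff.mpr ht.not_isUnit))
        rw [hz, zero_smul]
        exact Submodule.zero_mem _
    · refine Submodule.span_mono ?_
      rintro x ⟨i, hi, rfl⟩
      simp only [Finset.coe_filter, Set.mem_setOf_eq, Finset.mem_univ, true_and] at hi
      refine ⟨cB i, ?_, rfl⟩
      rw [Set.mem_setOf_eq]
      refine (hchar (j + 1) (cB i)).mpr fun i' => ?_
      rw [Basis.repr_self, Finsupp.single_apply]
      by_cases hii : i = i'
      · subst hii
        rw [if_pos rfl, mul_one]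
        exact dvd_trans (pow_dvd_pow t (by omega : j + 1 ≤ ε i)) (hε i).symm.dvd
      · rw [if_neg hii, mul_zero]
        exact dvd_zero _
  have hfin : ∀ j : ℕ,
      Module.finrank (IsLocalRing.ResidueField A)
        (Submodule.span (IsLocalRing.ResidueField A)
          ((fun v i => IsLocalRing.residue A (v i)) ''
            {f : Fin n → A | ∀ e : Fin n → A, t ^ (j + 1) ∣ a f e}))
      = (Finset.filter (fun i => j < ε i) Finset.univ).card := by
    intro j
    rw [hspan j]
    exact hdim _
  calc ∑' j : ℕ,
      (Module.finrank (IsLocalRing.ResidueField A)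
        (Submodule.span (IsLocalRing.ResidueField A)
          ((fun v i => IsLocalRing.residue A (v i)) ''
            {f : Fin n → A | ∀ e : Fin n → A, t ^ (j + 1) ∣ a f e})) : ENNReal)
      = ∑' j : ℕ, (((Finset.filter (fun i => j < ε i) Finset.univ).card : ℕ) : ENNReal) :=
        tsum_congr fun j => by rw [hfin j]
    _ = ((∑ i, ε i : ℕ) : ENNReal) := stmt11_sum_aux ε
    _ = (d : ENNReal) := by rw [hsum]
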